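/- (Chainkilling.) Let k ≥ 1, let φ be a Boolean function on V = {0,...,k}, and let ν ≠ ν' be two valuations such that there is a simple path ν = ν_0 − ν_1 − ... − ν_n − ν_{n+1} = ν' from ν to ν' in the hypercube graph G_V, with n ≥ 0 and ν_i ∉ sat(φ) for all 1 ≤ i ≤ n. If (−1)^{|ν|} ≠ (−1)^{|ν'|} and both ν and ν' belong to sat(φ), then the Boolean function φ' defined by sat(φ') = sat(φ) \ {ν, ν'} satisfies φ →±* φ' (in particular φ ≃ φ'). -/

import Mathlib

open scoped Classical

/-- Flip the membership of variable `l` in valuation `ν`. -/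
def flipV {k : ℕ} (ν : Finset (Fin (k + 1))) (l : Fin (k + 1)) : Finset (Fin (k + 1)) :=
  if l ∈ ν then ν.erase l else insert l ν

lemma flipV_flipV {k : ℕ} (ν : Finset (Fin (k + 1))) (l : Fin (k + 1)) :
    flipV (flipV ν l) l = ν := by
  unfold flipV
  by_cases h : l ∈ ν
  · simp [h, Finset.insert_erase h]
  · simp [h, Finset.erase_insert h]

lemma flipV_ne {k : ℕ} (ν : Finset (Fin (k + 1))) (l : Fin (k + 1)) :
    flipV ν l ≠ ν := by
  unfold flipV
  by_cases h : l ∈ ν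
  · simp only [h, if_true]
    intro he
    exact (Finset.notMem_erase l ν) (he.symm ▸ h)
  · simp only [h, if_false]
    intro he
    exact h (he ▸ Finset.mem_insert_self l ν)

/-- `φ →+ φ'`: there are `ν, l` with `ν ∉ sat(φ)`, `ν^(l) ∉ sat(φ)` and
`sat(φ') = sat(φ) ∪ {ν, ν^(l)}`. -/
def StepPlus (k : ℕ) (φ φ' : Finset (Fin (k + 1)) → Bool) : Prop :=
  ∃ (ν : Finset (Fin (k + 1))) (l : Fin (k + 1)),
    φ ν = false ∧ φ (flipV ν l) = false ∧
    ∀ μ, (φ' μ = true ↔ φ μ = true ∨ μ = ν ∨ μ = flipV ν l)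

/-- `φ →− φ'`: remove two adjacent satisfying valuations. -/
def StepMinus (k : ℕ) (φ φ' : Finset (Fin (k + 1)) → Bool) : Prop :=
  StepPlus k φ' φ

/-- `φ →± φ'`. -/
def StepPM (k : ℕ) (φ φ' : Finset (Fin (k + 1)) → Bool) : Prop :=
  StepPlus k φ φ' ∨ StepMinus k φ φ'

/-- The relation `≃` (equivalently `→±*`): the reflexive transitive closure of `→±`. -/
def EquivPM (k : ℕ) (φ φ' : Finset (Fin (k + 1)) → Bool) : Prop :=
  Relation.ReflTransGen (StepPM k) φ φ'

/-- The hypercube graph `G_V` on the valuations of `V = {0,...,k}`: there is an edge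
between `ν` and `ν^(l)` for every valuation `ν` and variable `l`. -/
def hypercube (k : ℕ) : SimpleGraph (Finset (Fin (k + 1))) where
  Adj ν μ := ∃ l, μ = flipV ν l
  symm := by
    constructor
    rintro ν μ ⟨l, rfl⟩
    exact ⟨l, (flipV_flipV ν l).symm⟩
  loopless := by
    constructor
    rintro ν ⟨l, h⟩
    exact flipV_ne ν l h.symm

lemma flip_parity {k : ℕ} (ν : Finset (Fin (k + 1))) (l : Fin (k + 1)) :
    (-1 : ℤ) ^ (flipV ν l).card = -(-1 : ℤ) ^ ν.card := by
  unfold flipV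
  by_cases h : l ∈ ν
  · obtain ⟨m, hm⟩ : ∃ m, ν.card = m + 1 :=
      ⟨ν.card - 1, by have := Finset.card_pos.mpr ⟨l, h⟩; omega⟩
    simp only [h, if_true, Finset.card_erase_of_mem h, hm]
    simp [pow_succ]
  · simp only [h, if_false, Finset.card_insert_of_notMem h]
    simp [pow_succ]

lemma walk_parity {k : ℕ} {u v : Finset (Fin (k + 1))} (p : (hypercube k).Walk u v) :
    (-1 : ℤ) ^ v.card = (-1 : ℤ) ^ u.card * (-1) ^ p.length := by
  induction p with
  | nil => simp
  | cons h q ih =>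
    obtain ⟨l, rfl⟩ := id h
    rw [SimpleGraph.Walk.length_cons, ih, flip_parity]
    ring

lemma chainkill_aux (k : ℕ) : ∀ (n : ℕ) (φ φ' : Finset (Fin (k + 1)) → Bool)
    (ν ν' : Finset (Fin (k + 1))), ν ≠ ν' →
    ∀ (p : (hypercube k).Walk ν ν'), p.length ≤ n → p.IsPath →
    (∀ μ ∈ p.support, μ ≠ ν → μ ≠ ν' → φ μ = false) →
    ((-1 : ℤ) ^ ν.card ≠ (-1 : ℤ) ^ ν'.card) →
    φ ν = true → φ ν' = true →
    (∀ μ, φ' μ = true ↔ (φ μ = true ∧ μ ≠ ν ∧ μ ≠ ν')) →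
    Relation.ReflTransGen (StepPM k) φ φ' := by
  intro n
  induction n with
  | zero =>
    intro φ φ' ν ν' hne p hlen
    cases p with
    | nil => exact absurd rfl hne
    | cons h q => simp [SimpleGraph.Walk.length_cons] at hlen
  | succ n ih =>
    intro φ φ' ν ν' hne p hlen hpath hint hpar hν hν' hφ'
    cases p with
    | nil => exact absurd rfl hne
    | @cons _ ν₁ _ hadj q =>
      obtain ⟨l, hl⟩ := id hadj
      cases q with
      | nil =>
        -- single edge: one StepMinus removes {ν, ν'}
        subst hl
        refine Relation.ReflTransGen.single (Or.inr ⟨ν, l, ?_, ?_, ?_⟩)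
        · exact Bool.eq_false_iff.mpr (fun ht => ((hφ' ν).mp ht).2.1 rfl)
        · exact Bool.eq_false_iff.mpr (fun ht => ((hφ' _).mp ht).2.2 rfl)
        · intro μ
          constructor
          · intro hμ
            by_cases h1 : μ = ν
            · exact Or.inr (Or.inl h1)
            by_cases h2 : μ = flipV ν l
            · exact Or.inr (Or.inr h2)
            · exact Or.inl ((hφ' μ).mpr ⟨hμ, h1, h2⟩)
          · rintro (h | rfl | rfl)
            · exact ((hφ' μ).mp h).1
            · exact hν
            · exact hν'
      | @cons _ ν₂ _ hadj' r =>
        obtain ⟨l', hl'⟩ := id hadj'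
        -- basic distinctness facts from the path
        have hsup := hpath.support_nodup
        rw [SimpleGraph.Walk.support_cons, SimpleGraph.Walk.support_cons,
          List.nodup_cons, List.nodup_cons] at hsup
        have hν_not := hsup.1
        have hν₁_not := hsup.2.1
        have hνne₁ : ν ≠ ν₁ := fun h => hν_not (h ▸ List.mem_cons_self)
        have hν₂mem : ν₂ ∈ r.support := r.start_mem_support
        have hν'mem : ν' ∈ r.support := r.end_mem_support
        have hνne₂ : ν ≠ ν₂ := fun h => hν_not (List.mem_cons_of_mem _ (h ▸ hν₂mem))
        have hνneν' : ν ≠ ν' := hne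
        have hν₁ne' : ν₁ ≠ ν' := fun h => hν₁_not (h ▸ hν'mem)
        have hν₁ne₂ : ν₁ ≠ ν₂ := fun h => flipV_ne ν₁ l' (hl' ▸ h.symm)
        -- parity facts
        have hpw := walk_parity (SimpleGraph.Walk.cons hadj (SimpleGraph.Walk.cons hadj' r))
        simp only [SimpleGraph.Walk.length_cons] at hpw
        have hν₂par : (-1 : ℤ) ^ ν₂.card = (-1 : ℤ) ^ ν.card := by
          rw [hl', flip_parity, hl, flip_parity]; ring
        have hrodd : ((-1 : ℤ)) ^ r.length = -1 := by
          rcases Nat.even_or_odd r.length with he | ho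
          · exfalso
            apply hpar
            rw [hpw]
            have : ((-1 : ℤ)) ^ (r.length + 1 + 1) = 1 := by
              have : Even (r.length + 1 + 1) := by
                obtain ⟨m, hm⟩ := he; exact ⟨m + 1, by omega⟩
              exact this.neg_one_pow
            rw [this, mul_one]
          · exact ho.neg_one_pow
        have hrpar := walk_parity r
        rw [hrodd] at hrpar
        have hpar' : (-1 : ℤ) ^ ν₂.card ≠ (-1 : ℤ) ^ ν'.card := by
          rw [hrpar]
          intro h
          have h2 : (-1 : ℤ) ^ ν₂.card = 0 := by linarith
          exact (by positivity : ((-1 : ℤ) ^ ν₂.card) ^ 2 ≠ 0) (by rw [h2]; ring)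
        have hν₂ne' : ν₂ ≠ ν' := fun h => hpar' (h ▸ rfl)
        -- φ-values on internal vertices
        have hφν₁ : φ ν₁ = false := by
          apply hint ν₁ _ hνne₁.symm hν₁ne'
          simp [SimpleGraph.Walk.support_cons]
        have hφν₂ : φ ν₂ = false := by
          apply hint ν₂ _ hνne₂.symm hν₂ne'
          simp [SimpleGraph.Walk.support_cons, hν₂mem]
        -- intermediate functions
        set φ₁ : Finset (Fin (k + 1)) → Bool :=
          fun μ => φ μ || decide (μ = ν₁) || decide (μ = ν₂) with hφ₁def
        set φ₂ : Finset (Fin (k + 1)) → Bool :=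
          fun μ => (φ₁ μ && !decide (μ = ν)) && !decide (μ = ν₁) with hφ₂def
        have step1 : StepPM k φ φ₁ := by
          refine Or.inl ⟨ν₁, l', hφν₁, ?_, ?_⟩
          · rw [← hl']; exact hφν₂
          · intro μ; rw [← hl']; simp [hφ₁def, or_assoc]
        have step2 : StepPM k φ₁ φ₂ := by
          refine Or.inr ⟨ν, l, ?_, ?_, ?_⟩
          · simp [hφ₂def]
          · rw [← hl]; simp [hφ₂def]
          · intro μ
            rw [← hl]
            by_cases h1 : μ = ν
            · subst h1; simp [hφ₁def, hν]
            by_cases h2 : μ = ν₁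
            · subst h2; simp [hφ₁def]
            · simp [hφ₂def, h1, h2]
        refine Relation.ReflTransGen.head step1 (Relation.ReflTransGen.head step2 ?_)
        apply ih φ₂ φ' ν₂ ν' hν₂ne' r
        · simp only [SimpleGraph.Walk.length_cons] at hlen; omega
        · exact hpath.of_cons.of_cons
        · intro μ hμ hμ₂ hμ'
          have hμν : μ ≠ ν := fun h => hν_not (List.mem_cons_of_mem _ (h ▸ hμ))
          have hμν₁ : μ ≠ ν₁ := fun h => hν₁_not (h ▸ hμ)
          have hφμ : φ μ = false := by
            apply hint μ _ hμν hμ'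
            simp [SimpleGraph.Walk.support_cons]
            exact Or.inr (Or.inr hμ)
          simp [hφ₂def, hφ₁def, hφμ, hμν₁, hμ₂]
        · rw [hν₂par]; exact hpar
        · simp [hφ₂def, hφ₁def, hνne₂.symm, hν₁ne₂.symm]
        · simp [hφ₂def, hφ₁def, hν', hne.symm, hν₁ne'.symm]
        · intro μ
          rw [hφ' μ]
          constructor
          · rintro ⟨hφμ, hμν, hμν'⟩
            have hμν₁ : μ ≠ ν₁ := fun h => by rw [h, hφν₁] at hφμ; exact absurd hφμ (by simp)
            have hμν₂ : μ ≠ ν₂ := fun h => by rw [h, hφν₂] at hφμ; exact absurd hφμ (by simp)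
            refine ⟨by simp [hφ₂def, hφ₁def, hφμ, hμν, hμν₁], hμν₂, hμν'⟩
          · rintro ⟨hφ₂μ, hμν₂, hμν'⟩
            simp only [hφ₂def, hφ₁def, Bool.and_eq_true, Bool.or_eq_true,
              Bool.not_eq_true', decide_eq_false_iff_not, decide_eq_true_eq] at hφ₂μ
            obtain ⟨⟨hor, hμν⟩, hμν₁⟩ := hφ₂μ
            refine ⟨?_, hμν, hμν'⟩
            rcases hor with (h | h) | h
            · exact h
            · exact absurd h hμν₁
            · exact absurd h hμν₂
/-- Chainkilling: if there is a simple path from `ν` to `ν'` in `G_V` whose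
internal vertices do not satisfy `φ`, with `(-1)^{|ν|} ≠ (-1)^{|ν'|}` and `ν, ν' ∈ sat(φ)`,
then the function `φ'` with `sat(φ') = sat(φ) \ {ν, ν'}` satisfies `φ →±* φ'`. -/
theorem stmt7 (k : ℕ) (hk : 1 ≤ k) (φ φ' : Finset (Fin (k + 1)) → Bool)
    (ν ν' : Finset (Fin (k + 1))) (hne : ν ≠ ν')
    (p : (hypercube k).Walk ν ν') (hpath : p.IsPath)
    (hint : ∀ μ ∈ p.support, μ ≠ ν → μ ≠ ν' → φ μ = false)
    (hpar : ((-1 : ℤ) ^ ν.card ≠ (-1 : ℤ) ^ ν'.card))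
    (hν : φ ν = true) (hν' : φ ν' = true)
    (hφ' : ∀ μ, φ' μ = true ↔ (φ μ = true ∧ μ ≠ ν ∧ μ ≠ ν')) :
    Relation.ReflTransGen (StepPM k) φ φ' := by
  exact chainkill_aux k p.length φ φ' ν ν' hne p le_rfl hpath hint hpar hν hν' hφ'
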